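/- Let (Y,d) be a metric space, let X and C be nonempty subsets of Y, and let x ∈ X. Then for each ε > 0 and each t ∈ C ∩ Ĩ_X(x) there exists z ∈ X with z ≠ x such that (1−ε) d(x,z) ≤ d(x,t) − d(z,t). If moreover t is a nearest point of C to x, i.e. d(x,t) = d(x,C), and t ∈ Ĩ_X(x), then (1−ε) d(x,z) ≤ d(x,C) − d(z,C). -/
import Mathlib


open Metric Filter

/-- The generalized inward set `Ĩ_X(x)`: the set of `t ∈ Y` such that for each `β > 0`
there are `s ∈ (x,t]` (i.e. `d(x,s) + d(s,t) = d(x,t)` and `s ≠ x`) and `z ∈ X` with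
`d(z,s) ≤ β·d(x,s)`. -/
def genInwardSet {Y : Type*} [MetricSpace Y] (X : Set Y) (x : Y) : Set Y :=
  {t | ∀ β : ℝ, 0 < β → ∃ s : Y,
    (dist x s + dist s t = dist x t ∧ s ≠ x) ∧ ∃ z ∈ X, dist z s ≤ β * dist x s}

/-- **Lemma 3.5.** Let `(Y,d)` be a metric space, `X, C` nonempty subsets of `Y`, and
`x ∈ X`. For each `ε > 0` and `t ∈ C ∩ Ĩ_X(x)` there exists `z ∈ X`, `z ≠ x`, with
`(1−ε)·d(x,z) ≤ d(x,t) − d(z,t)`; moreover, if `t` is a nearest point of `C` to `x`,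
then `(1−ε)·d(x,z) ≤ d(x,C) − d(z,C)`. -/
theorem exists_inward_step
    {Y : Type*} [MetricSpace Y] (X C : Set Y) (hX : X.Nonempty) (hC : C.Nonempty)
    (x : Y) (hx : x ∈ X) (ε : ℝ) (hε : 0 < ε)
    (t : Y) (htC : t ∈ C) (htI : t ∈ genInwardSet X x) :
    (∃ z ∈ X, z ≠ x ∧ (1 - ε) * dist x z ≤ dist x t - dist z t) ∧
    (dist x t = infDist x C →
      ∃ z ∈ X, z ≠ x ∧ (1 - ε) * dist x z ≤ infDist x C - infDist z C) := by
  set β : ℝ := min ε 1 / 2 with hβdef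
  have hβ0 : 0 < β := by positivity
  have hβε : β ≤ ε / 2 := by
    simp only [hβdef]; gcongr; exact min_le_left _ _
  have hβ1 : β < 1 := by
    have := min_le_right ε 1; simp only [hβdef]; linarith
  obtain ⟨s, ⟨hseg, hsx⟩, z, hzX, hzs⟩ := htI β hβ0
  have hxs : 0 < dist x s := dist_pos.2 (Ne.symm hsx)
  have hzx : z ≠ x := fun h => by
    rw [h] at hzs; nlinarith
  have hkey : (1 - ε) * dist x z ≤ dist x t - dist z t := by
    have h1 : dist z t ≤ dist z s + dist s t := dist_triangle _ _ _
    have h2 : dist x z ≤ dist x s + dist z s := by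
      rw [dist_comm z s] at *; exact dist_triangle _ _ _
    have h3 : 0 ≤ dist x z := dist_nonneg
    rcases le_or_gt ε 1 with hε1 | hε1
    · nlinarith [mul_le_mul_of_nonneg_left h2 (by linarith : (0:ℝ) ≤ 1 - ε),
        mul_nonneg (by linarith : (0:ℝ) ≤ ε - 2*β) hxs.le, mul_nonneg hε.le (dist_nonneg (x := z) (y := s))]
    · nlinarith [mul_nonneg (by linarith : (0:ℝ) ≤ 1 - β) hxs.le,
        mul_nonpos_of_nonpos_of_nonneg (by linarith : 1 - ε ≤ 0) h3]
  refine ⟨⟨z, hzX, hzx, hkey⟩, fun hnear => ⟨z, hzX, hzx, ?_⟩⟩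
  have : infDist z C ≤ dist z t := infDist_le_dist_of_mem htC
  linarith [hkey, hnear ▸ hkey]
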